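/- Let X be a proper normal integral scheme over a field K of characteristic p > 0 with H^0(X, O_X) = K, and let K ⊂ K' be a purely inseparable field extension of degree p. Then X ⊗_K K' is an integral scheme. -/

import Mathlib

open AlgebraicGeometry CategoryTheory

open TensorProduct Polynomial in
/-- In a purely inseparable extension of prime degree `p`, every `p`-th power of the
extension lies in the base field. -/
theorem aux_pow_mem (p : ℕ) [Fact p.Prime] (K K' : Type*) [Field K] [Field K'] [Algebra K K']
    [CharP K p] [IsPurelyInseparable K K'] (hdeg : Module.finrank K K' = p) (b : K') :
    ∃ y : K, b ^ p = algebraMap K K' y := by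
  have hp : p.Prime := Fact.out
  haveI : ExpChar K p := ExpChar.prime hp
  haveI : FiniteDimensional K K' := Module.finite_of_finrank_pos (by
    rw [hdeg]; exact hp.pos)
  obtain ⟨n, y, hmin⟩ := IsPurelyInseparable.minpoly_eq_X_pow_sub_C K p b
  have hdvd : (minpoly K b).natDegree ∣ Module.finrank K K' :=
    minpoly.degree_dvd (IsIntegral.of_finite K b)
  rw [hmin, hdeg, natDegree_X_pow_sub_C] at hdvd
  have hn : n ≤ 1 := by
    have hdvd' : p ^ n ∣ p ^ 1 := by simpa using hdvd
    exact (Nat.pow_dvd_pow_iff_le_right hp.one_lt).mp hdvd'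
  have hev := minpoly.aeval K b
  rw [hmin] at hev
  have hb : b ^ p ^ n = algebraMap K K' y := by
    have := hev
    rw [map_sub, map_pow, aeval_X, aeval_C, sub_eq_zero] at this
    exact this
  interval_cases n
  · refine ⟨y ^ p, ?_⟩
    rw [pow_zero, pow_one] at hb
    rw [hb, ← map_pow]
  · rw [pow_one] at hb
    exact ⟨y, hb⟩

open TensorProduct Polynomial in
/-- Key algebra lemma: if `c` has no `p`-th root in the field `F`, `K'/K` is a degree `p`
extension generated by a `p`-th root of `c`, and `A` embeds in `F` as `K`-algebras,
then `A ⊗[K] K'` is a domain. -/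
theorem aux_isDomain (p : ℕ) (hp : p.Prime) (K K' F A : Type) [Field K] [Field K'] [Field F]
    [CommRing A] [Algebra K K'] [Algebra K F] [Algebra K A]
    (hdeg : Module.finrank K K' = p) (c : K) (a : K')
    (hac : algebraMap K K' c = a ^ p)
    (hc : ∀ b : F, b ^ p ≠ algebraMap K F c)
    (j : A →ₐ[K] F) (hj : Function.Injective j) :
    IsDomain (TensorProduct K A K') := by
  haveI : FiniteDimensional K K' := Module.finite_of_finrank_pos (by rw [hdeg]; exact hp.pos)
  -- the polynomial over F
  set q : F[X] := X ^ p - C (algebraMap K F c) with hq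
  have hirr : Irreducible q := X_pow_sub_C_irreducible_of_prime hp hc
  haveI : Fact (Irreducible q) := ⟨hirr⟩
  have hq0 : q ≠ 0 := hirr.ne_zero
  -- dimension computations
  have hfinT : Module.finrank F (TensorProduct K F K') = p := by
    rw [Module.finrank_baseChange, hdeg]
  haveI : Nontrivial (TensorProduct K F K') :=
    Module.nontrivial_of_finrank_pos (R := F) (by rw [hfinT]; exact hp.pos)
  -- the root `1 ⊗ a`
  have key : (algebraMap F (TensorProduct K F K')) (algebraMap K F c)
      = (1 : F) ⊗ₜ[K] (algebraMap K K' c) := by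
    simp only [Algebra.TensorProduct.algebraMap_apply, Algebra.algebraMap_self,
      RingHom.id_apply]
    rw [show (algebraMap K F) c = c • (1 : F) from Algebra.algebraMap_eq_smul_one c,
      TensorProduct.smul_tmul,
      show c • (1 : K') = algebraMap K K' c from (Algebra.algebraMap_eq_smul_one c).symm]
  have hval : aeval ((1 : F) ⊗ₜ[K] a) q = 0 := by
    rw [hq, map_sub, map_pow, aeval_X, aeval_C, sub_eq_zero,
      Algebra.TensorProduct.tmul_pow, one_pow, key, hac]
  let ψ : AdjoinRoot q →ₐ[F] TensorProduct K F K' := AdjoinRoot.liftAlgHom q (Algebra.ofId F _) _ hval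
  have hinj : Function.Injective ψ := ψ.toRingHom.injective
  haveI : FiniteDimensional F (AdjoinRoot q) := (AdjoinRoot.powerBasis hq0).finite
  have hfinA : Module.finrank F (AdjoinRoot q) = p := by
    rw [(AdjoinRoot.powerBasis hq0).finrank, AdjoinRoot.powerBasis_dim, hq,
      natDegree_X_pow_sub_C]
  have hsurj : Function.Surjective ψ := by
    have := (LinearMap.injective_iff_surjective_of_finrank_eq_finrank
      (f := ψ.toLinearMap) (by rw [hfinA, hfinT])).mp hinj
    exact this
  let e : AdjoinRoot q ≃ₐ[F] TensorProduct K F K' := AlgEquiv.ofBijective ψ ⟨hinj, hsurj⟩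
  haveI : IsDomain (TensorProduct K F K') :=
    Function.Injective.isDomain e.symm.toRingEquiv.toRingHom e.symm.injective
  -- now embed A ⊗ K' into F ⊗ K'
  let θ : TensorProduct K A K' →ₐ[K] TensorProduct K F K' :=
    Algebra.TensorProduct.map j (AlgHom.id K K')
  have hθ : Function.Injective θ := by
    have h1 : ⇑θ = ⇑(LinearMap.rTensor K' j.toLinearMap) := rfl
    rw [h1]
    exact Module.Flat.rTensor_preserves_injective_linearMap (M := K') j.toLinearMap hj
  exact Function.Injective.isDomain θ.toRingHom hθ

/-- A topological space covered by open irreducible pairwise-intersecting sets is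
preirreducible. -/
theorem aux_preirreducible {Y : Type*} [TopologicalSpace Y] {ι : Type*} (W : ι → Set Y)
    (hopen : ∀ i, IsOpen (W i)) (hirr : ∀ i, IsIrreducible (W i))
    (hcov : ∀ y : Y, ∃ i, y ∈ W i) (hmeet : ∀ i j, (W i ∩ W j).Nonempty) :
    PreirreducibleSpace Y := by
  constructor
  rintro u v hu hv ⟨x, -, hxu⟩ ⟨y, -, hyv⟩
  obtain ⟨i, hxi⟩ := hcov x
  obtain ⟨j, hyj⟩ := hcov y
  -- W i meets u, W i meets W j, so W i ∩ (u ∩ W j) ≠ ∅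
  obtain ⟨z, hzi, hzu, hzj⟩ : (W i ∩ (u ∩ W j)).Nonempty := by
    have := (hirr i).2 u (W j) hu (hopen j) ⟨x, hxi, hxu⟩
      (by obtain ⟨w, hw⟩ := hmeet i j; exact ⟨w, hw.1, hw.2⟩)
    obtain ⟨z, hz1, hz2, hz3⟩ := this
    exact ⟨z, hz1, hz2, hz3⟩
  -- now W j meets u and v
  obtain ⟨t, -, htu, htv⟩ := (hirr j).2 u v hu hv ⟨z, hzj, hzu⟩ ⟨y, hyj, hyv⟩
  exact ⟨t, Set.mem_univ t, htu, htv⟩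

/-- Let `X` be a proper normal integral scheme over a field `K` of characteristic `p > 0`
with `H⁰(X, O_X) = K`, and let `K ⊂ K'` be a purely inseparable field extension of
degree `p`.  Then `X ⊗_K K'` is an integral scheme. -/
theorem stmt_1 (p : ℕ) [Fact p.Prime] (K K' : Type) [Field K] [Field K'] [Algebra K K']
    [CharP K p] [IsPurelyInseparable K K'] (hdeg : Module.finrank K K' = p)
    (X : Scheme) (f : X ⟶ Spec (CommRingCat.of K)) [IsProper f] [IsIntegral X]
    (hnormal : ∀ x : X, IsIntegrallyClosed (X.presheaf.stalk x))
    (hglobal : Function.Bijective (f.app ⊤)) :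
    IsIntegral (Limits.pullback f (Spec.map (CommRingCat.ofHom (algebraMap K K')))) := by
  classical
  have hp : p.Prime := Fact.out
  haveI : CharP K' p := charP_of_injective_algebraMap (algebraMap K K').injective p
  set g : Spec (CommRingCat.of K') ⟶ Spec (CommRingCat.of K) :=
    Spec.map (CommRingCat.ofHom (algebraMap K K')) with hgdef
  -- choose `a ∉ K` with `a ^ p ∈ K`
  have hns : ¬ Function.Surjective (algebraMap K K') := by
    intro hs
    have e : K ≃ₐ[K] K' :=
      AlgEquiv.ofBijective (Algebra.ofId K K') ⟨(algebraMap K K').injective, hs⟩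
    have h1 : Module.finrank K K' = 1 := by
      rw [← e.toLinearEquiv.finrank_eq]
      exact Module.finrank_self K
    rw [hdeg] at h1
    exact hp.one_lt.ne' h1
  obtain ⟨a, ha⟩ : ∃ a : K', a ∉ Set.range (algebraMap K K') := by
    by_contra h
    push_neg at h
    exact hns fun z => h z
  obtain ⟨c, hc⟩ := aux_pow_mem p K K' hdeg a
  -- the function field of `X` with its `K`-algebra structure
  haveI nX : Nonempty X := inferInstance
  haveI : Nonempty (⊤ : X.Opens) := ⟨⟨nX.some, trivial⟩⟩
  set κ : CommRingCat.of K ⟶ X.functionField :=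
    (Scheme.ΓSpecIso (CommRingCat.of K)).inv ≫ f.appTop ≫ X.germToFunctionField ⊤ with hκ
  -- the key global statement: `c` has no `p`-th root in the function field
  have hb : ∀ b : X.functionField, b ^ p ≠ κ c := by
    intro b hbp
    -- through every stalk, `b` comes from a local section
    have hsec : ∀ x : X, ∃ (W : X.Opens) (hxW : x ∈ W) (hηW : genericPoint X ∈ W)
        (t : Γ(X, W)), X.presheaf.germ W (genericPoint X) hηW t = b := by
      intro x
      haveI := hnormal x
      set cx : X.presheaf.stalk x :=
        X.presheaf.germ ⊤ x trivial (f.appTop ((Scheme.ΓSpecIso (CommRingCat.of K)).inv c))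
        with hcx
      have hmap : algebraMap ↑(X.presheaf.stalk x) ↑X.functionField cx = κ c := by
        show X.presheaf.stalkSpecializes ((genericPoint_spec X).specializes trivial)
          (X.presheaf.germ ⊤ x trivial
            (f.appTop ((Scheme.ΓSpecIso (CommRingCat.of K)).inv c))) = κ c
        erw [TopCat.Presheaf.germ_stalkSpecializes_apply]
        rfl
      have hint : IsIntegral (↑(X.presheaf.stalk x)) b := by
        refine ⟨Polynomial.X ^ p - Polynomial.C cx,
          Polynomial.monic_X_pow_sub_C cx hp.ne_zero, ?_⟩
        rw [Polynomial.eval₂_sub, Polynomial.eval₂_X_pow, Polynomial.eval₂_C]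
        rw [hmap, hbp, sub_self]
      obtain ⟨s, hs⟩ := IsIntegrallyClosed.isIntegral_iff.mp hint
      obtain ⟨W, hxW, t, ht⟩ := TopCat.Presheaf.exists_germ_eq X.presheaf s
      have hηW : genericPoint X ∈ W :=
        ((genericPoint_spec X).mem_open_set_iff W.isOpen).mpr (by simpa using ⟨x, hxW⟩)
      refine ⟨W, hxW, hηW, t, ?_⟩
      have h1 : algebraMap ↑(X.presheaf.stalk x) ↑X.functionField
          (X.presheaf.germ W x hxW t) = X.presheaf.germ W (genericPoint X) hηW t := by
        show X.presheaf.stalkSpecializes ((genericPoint_spec X).specializes trivial)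
          (X.presheaf.germ W x hxW t) = X.presheaf.germ W (genericPoint X) hηW t
        rw [TopCat.Presheaf.germ_stalkSpecializes_apply]
      rw [← h1, ht, hs]
    choose W hxW hηW t ht using hsec
    have hcompat : TopCat.Presheaf.IsCompatible X.sheaf.val W t := by
      intro i j
      have hη : genericPoint X ∈ W i ⊓ W j := ⟨hηW i, hηW j⟩
      have h1 : X.presheaf.germ (W i ⊓ W j) (genericPoint X) hη
          (X.presheaf.map (TopologicalSpace.Opens.infLELeft (W i) (W j)).op (t i)) = b := by
        rw [TopCat.Presheaf.germ_res_apply]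
        exact ht i
      have h2 : X.presheaf.germ (W i ⊓ W j) (genericPoint X) hη
          (X.presheaf.map (TopologicalSpace.Opens.infLERight (W i) (W j)).op (t j)) = b := by
        rw [TopCat.Presheaf.germ_res_apply]
        exact ht j
      have := germ_injective_of_isIntegral X (genericPoint X) hη (h1.trans h2.symm)
      exact this
    obtain ⟨s, hs, -⟩ := X.sheaf.existsUnique_gluing' W ⊤ (fun i => homOfLE le_top)
      (fun y _ => TopologicalSpace.Opens.mem_iSup.mpr ⟨y, hxW y⟩) t hcompat
    have hsb : X.presheaf.germ ⊤ (genericPoint X) trivial s = b := by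
      have h1 := TopCat.Presheaf.germ_res_apply X.presheaf
        (homOfLE le_top : W nX.some ⟶ ⊤) (genericPoint X) (hηW nX.some) s
      rw [← h1, show X.presheaf.map (homOfLE (le_top : W nX.some ≤ ⊤)).op s = t nX.some
        from hs nX.some, ht nX.some]
    obtain ⟨u, hu⟩ := hglobal.2 s
    set k : K := (Scheme.ΓSpecIso (CommRingCat.of K)).hom u with hk
    have hinvk : (Scheme.ΓSpecIso (CommRingCat.of K)).inv k = u := by
      have h2 : ((Scheme.ΓSpecIso (CommRingCat.of K)).hom ≫
          (Scheme.ΓSpecIso (CommRingCat.of K)).inv) u = u := by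
        rw [Iso.hom_inv_id]
        rfl
      exact h2
    have hκk : κ k = b := by
      show X.germToFunctionField ⊤ (f.appTop ((Scheme.ΓSpecIso (CommRingCat.of K)).inv k)) = b
      rw [hinvk]
      show X.presheaf.germ ⊤ (genericPoint X) _ (f.app ⊤ u) = b
      rw [hu]
      exact hsb
    have hκinj : Function.Injective κ := by
      have : ⇑κ = ⇑(X.germToFunctionField ⊤) ∘ ⇑(f.app ⊤) ∘
          ⇑(Scheme.ΓSpecIso (CommRingCat.of K)).inv := rfl
      rw [this]
      exact (X.germToFunctionField_injective ⊤).comp (hglobal.1.comp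
        (ConcreteCategory.bijective_of_isIso _).injective)
    have hkc : k ^ p = c := by
      apply hκinj
      rw [map_pow, hκk, hbp]
    apply ha
    refine ⟨k, ?_⟩
    have hpow : (algebraMap K K' k) ^ p = a ^ p := by
      rw [← map_pow, hkc, ← hc]
    exact frobenius_inj K' p (by rw [frobenius_def, frobenius_def, hpow])
  -- the affine cover and the induced cover of the pullback
  set U : X → X.Opens := fun x => (X.affineCover.f (X.affineCover.idx x)).opensRange with hUdef
  have hUmem : ∀ x, x ∈ U x := fun x => X.affineCover.covers x
  have hUne : ∀ x, Nonempty ↥(U x) := fun x => ⟨⟨x, hUmem x⟩⟩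
  have hUsup : ⨆ x, U x = ⊤ := by
    rw [eq_top_iff]
    intro y _
    exact TopologicalSpace.Opens.mem_iSup.mpr ⟨y, hUmem y⟩
  set 𝒰 : X.OpenCover := X.openCoverOfIsOpenCover U hUsup with h𝒰
  set 𝒱 : (Limits.pullback f g).OpenCover := Scheme.Pullback.openCoverOfLeft 𝒰 f g with h𝒱
  -- each piece of the cover is integral
  have hpiece : ∀ x : X, IsIntegral (𝒱.X x) := by
    intro x
    have hU : IsAffineOpen (U x) := isAffineOpen_opensRange _
    haveI : Nonempty (U x) := ⟨⟨x, hUmem x⟩⟩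
    haveI : IsAffine (U x).toScheme := hU
    set V : Scheme := (U x).toScheme with hV
    set h : V ⟶ Spec (CommRingCat.of K) := (U x).ι ≫ f with hh
    set χ : CommRingCat.of K ⟶ Γ(V, ⊤) :=
      (Scheme.ΓSpecIso (CommRingCat.of K)).inv ≫ h.appTop with hχ
    have heq : V.isoSpec.hom ≫ Spec.map χ = h := by
      rw [hχ, Spec.map_comp, ← Category.assoc, Scheme.isoSpec_hom_naturality, Category.assoc,
        Scheme.isoSpec_Spec_hom, ← Spec.map_comp, Iso.inv_hom_id, Spec.map_id, Category.comp_id]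
    letI algA : Algebra K ↑Γ(V, ⊤) := χ.hom.toAlgebra
    letI algF : Algebra K ↑X.functionField := κ.hom.toAlgebra
    set jr : Γ(V, ⊤) ⟶ X.functionField := (U x).topIso.hom ≫ X.germToFunctionField (U x)
      with hjr
    have hres : (U x).ι.appTop ≫ (U x).topIso.hom ≫ X.germToFunctionField (U x)
        = X.germToFunctionField ⊤ := by
      rw [Scheme.Opens.ι_appTop]
      show X.presheaf.map _ ≫ X.presheaf.map _ ≫ X.presheaf.germ _ _ _
        = X.presheaf.germ _ _ _
      rw [Iso.op_hom, eqToIso.hom, TopCat.Presheaf.germ_res, TopCat.Presheaf.germ_res]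
    have hcomm : χ ≫ jr = κ := by
      rw [hχ, hjr, hκ, hh, Scheme.Hom.comp_appTop, ← hres]
      simp only [Category.assoc]
    have hcomm' : ∀ k : K, jr (χ k) = κ k := by
      intro k
      have := congrArg (fun (φ : CommRingCat.of K ⟶ X.functionField) => φ k) hcomm
      simpa using this
    let j : ↑Γ(V, ⊤) →ₐ[K] ↑X.functionField :=
      { toRingHom := jr.hom, commutes' := hcomm' }
    have hjinj : Function.Injective jr := by
      rw [hjr]
      have hco : ⇑((U x).topIso.hom ≫ X.germToFunctionField (U x))
          = ⇑(X.germToFunctionField (U x)) ∘ ⇑((U x).topIso.hom) := rfl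
      rw [hco]
      exact (X.germToFunctionField_injective (U x)).comp
        (ConcreteCategory.bijective_of_isIso (U x).topIso.hom).injective
    haveI hdom : IsDomain (TensorProduct K ↑Γ(V, ⊤) K') :=
      aux_isDomain p hp K K' ↑X.functionField ↑Γ(V, ⊤) hdeg c a hc.symm hb j hjinj
    let e1 : 𝒱.X x ≅ Limits.pullback (Spec.map χ) g :=
      @asIso _ _ _ _ (Limits.pullback.map (𝒰.f x ≫ f) g (Spec.map χ) g V.isoSpec.hom (𝟙 _) (𝟙 _)
        heq.symm (by simp)) (@Limits.pullback.map_isIso _ _ _ _ _ _ _ _ _ _ _ _ _ _ _ _ _ _ _ (Iso.isIso_hom V.isoSpec) _ _)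
    let e2 : Limits.pullback (Spec.map χ) g ≅
        Spec (CommRingCat.of (TensorProduct K ↑Γ(V, ⊤) K')) :=
      pullbackSpecIso K ↑Γ(V, ⊤) K'
    haveI : IsDomain ↑(CommRingCat.of (TensorProduct K ↑Γ(V, ⊤) K')) := hdom
    haveI : IsIntegral (Spec (CommRingCat.of (TensorProduct K ↑Γ(V, ⊤) K'))) := inferInstance
    haveI : Nonempty (𝒱.X x) := ⟨(e1 ≪≫ e2).inv.base (IsIntegral.nonempty (X := Spec (CommRingCat.of (TensorProduct K ↑Γ(V, ⊤) K')))).some⟩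
    exact isIntegral_of_isOpenImmersion (e1 ≪≫ e2).hom
  -- surjectivity of the first projection
  haveI : AlgebraicGeometry.Surjective g := by
    constructor
    intro s
    refine ⟨Classical.arbitrary _, ?_⟩
    have : Subsingleton (PrimeSpectrum K) := inferInstance
    exact Subsingleton.elim _ _
  haveI hsurj : AlgebraicGeometry.Surjective (Limits.pullback.fst f g) :=
    inferInstance
  -- ranges of the cover pieces
  have hW : ∀ x : X, Set.range (𝒱.f x).base
      = (Limits.pullback.fst f g).base ⁻¹' (U x : Set X) := by
    intro x
    have h1 := Scheme.Pullback.range_map (𝒰.f x ≫ f) g f g (𝒰.f x) (𝟙 _) (𝟙 _)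
        (Category.comp_id _) (by simp)
    refine h1.trans ?_
    have h2 : Set.range (𝒰.f x).base = (U x : Set X) := Scheme.Opens.range_ι (U x)
    rw [h2]
    simp
  -- irreducibility of the pullback
  haveI : IrreducibleSpace ↥(Limits.pullback f g) := by
    have pre : PreirreducibleSpace ↥(Limits.pullback f g) := by
      apply aux_preirreducible (fun x : X => Set.range (𝒱.f x).base)
      · intro i
        exact (𝒱.map_prop i).base_open.isOpen_range
      · intro i
        haveI := hpiece i
        have h1 : IsIrreducible (Set.univ : Set (𝒱.X i)) :=
          (IrreducibleSpace.isIrreducible_univ _)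
        have h2 := h1.image (𝒱.f i).base (𝒱.f i).base.hom.continuous.continuousOn
        rwa [Set.image_univ] at h2
      · intro y
        exact ⟨𝒱.idx y, 𝒱.covers y⟩
      · intro i j
        rw [hW i, hW j, ← Set.preimage_inter]
        obtain ⟨z, hz⟩ : ((U i : Set X) ∩ (U j : Set X)).Nonempty := by
          apply nonempty_preirreducible_inter (U i).2 (U j).2
          · exact ⟨i, hUmem i⟩
          · exact ⟨j, hUmem j⟩
        obtain ⟨w, hw⟩ := hsurj.surj z
        exact ⟨w, by rw [Set.mem_preimage, hw]; exact hz⟩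
    refine { toPreirreducibleSpace := pre, toNonempty := ?_ }
    obtain ⟨w, -⟩ := hsurj.surj nX.some
    exact ⟨w⟩
  -- reducedness of the pullback
  haveI : IsReduced (Limits.pullback f g) := by
    have hst : ∀ y : ↥(Limits.pullback f g),
        _root_.IsReduced ((Limits.pullback f g).presheaf.stalk y) := by
      intro y
      haveI := hpiece (𝒱.idx y)
      obtain ⟨z, hz⟩ := 𝒱.covers y
      rw [← hz]
      exact isReduced_of_injective ((𝒱.f (𝒱.idx y)).stalkMap z).hom
        ((asIso ((𝒱.f (𝒱.idx y)).stalkMap z)).commRingCatIsoToRingEquiv.injective)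
    exact @isReduced_of_isReduced_stalk _ hst
  exact isIntegral_of_irreducibleSpace_of_isReduced _
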